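/- In the pebble game with parameters (k,0) on vertex set V: if the algorithm (starting with k pebbles on each vertex, performing add-edge moves that require at least 1 pebble on the vertices of the new hyperedge and remove one pebble, and pebble-shift moves) terminates with exactly 0 pebbles remaining, then the constructed hypergraph is (k,0)-tight; moreover at every stage the constructed hypergraph is (k,0)-sparse. -/

import Mathlib

/-- A state of the `(k,0)`-pebble game: a list of placed hyperedges with their tail
vertices, and a pebble count on each vertex. -/
structure PebbleState (V : Type*) where
  edges : List (Finset V × V)
  pebbles : V → ℕ

/-- The moves of the `(k,0)`-pebble game: `addEdge` requires at least one pebble on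
the vertices of the new hyperedge, removes a pebble from some vertex `v` of the edge
and makes `v` its tail; `shift` moves a pebble from a vertex `v₁` of an edge with
tail `v₂` to `v₂` and re-tails the edge at `v₁`. -/
inductive PebbleStep {V : Type*} [DecidableEq V] : PebbleState V → PebbleState V → Prop
  | addEdge (s : PebbleState V) (e : Finset V) (v : V) (hv : v ∈ e)
      (htotal : 1 ≤ ∑ u ∈ e, s.pebbles u) (hvp : 0 < s.pebbles v) :
      PebbleStep s ⟨(e, v) :: s.edges, Function.update s.pebbles v (s.pebbles v - 1)⟩
  | shift (s : PebbleState V) (e : Finset V) (v₂ : V) (he : (e, v₂) ∈ s.edges)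
      (v₁ : V) (hv₁ : v₁ ∈ e) (hp : 0 < s.pebbles v₁) :
      PebbleStep s ⟨(e, v₁) :: s.edges.erase (e, v₂),
        Function.update (Function.update s.pebbles v₁ (s.pebbles v₁ - 1)) v₂
          (Function.update s.pebbles v₁ (s.pebbles v₁ - 1) v₂ + 1)⟩

lemma sum_countP_tail {V : Type*} [DecidableEq V] (l : List (Finset V × V)) (V' : Finset V) :
    ∑ v ∈ V', l.countP (fun q => decide (q.2 = v)) = l.countP (fun q => decide (q.2 ∈ V')) := by
  induction l with
  | nil => simp
  | cons a l ih =>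
    simp only [List.countP_cons, Finset.sum_add_distrib, ih]
    congr 1
    simp [Finset.sum_ite_eq' V' a.2]

lemma pebble_inv {V : Type*} [Fintype V] [DecidableEq V] (k : ℕ) (s : PebbleState V)
    (h : Relation.ReflTransGen PebbleStep ⟨([] : List (Finset V × V)), fun _ => k⟩ s) :
    (∀ v, s.pebbles v + s.edges.countP (fun q => decide (q.2 = v)) = k) ∧
    (∀ p ∈ s.edges, p.2 ∈ p.1) := by
  induction h with
  | refl => simp
  | @tail b c hsteps step ih =>
    cases step with
    | addEdge e v hv htotal hvp =>
      constructor
      · intro u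
        have h1 := ih.1 u
        simp only [List.countP_cons, Function.update_apply]
        by_cases huv : u = v
        · subst huv
          simp only [if_pos rfl, decide_eq_true_eq]
          simp only [show ((e, u).2 = u) = True from by simp, if_true]
          omega
        · have h' : ¬((e, v).2 = u) := fun h => huv h.symm
          rw [if_neg huv]
          simp only [h', decide_false, Bool.false_eq_true, if_false]
          omega
      · intro p hp'
        rcases List.mem_cons.mp hp' with rfl | hp'
        · exact hv
        · exact ih.2 p hp'
    | shift e v₂ he v₁ hv₁ hp =>
      have hE : b.edges.erase (e, v₂) =
          @List.erase _ instBEqOfDecidableEq b.edges (e, v₂) := by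
        congr 1
        refine congrArg BEq.mk (funext fun a => funext fun b => ?_)
        show (a == b) = decide (a = b)
        by_cases hab : a = b <;> simp [hab, Prod.ext_iff]
      have hc : ∀ u : V, b.edges.countP (fun q => decide (q.2 = u)) =
          (b.edges.erase (e, v₂)).countP (fun q => decide (q.2 = u))
            + (if v₂ = u then 1 else 0) := by
        intro u
        rw [(List.perm_cons_erase he).countP_eq]
        simp [List.countP_cons, add_comm]
      constructor
      · intro u
        have h1 := ih.1 u
        rw [hc u] at h1
        simp only [List.countP_cons, Function.update_apply]
        by_cases hu1 : u = v₁
        · subst hu1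
          by_cases hu2 : u = v₂
          · subst hu2
            simp at h1 ⊢
            omega
          · simp [hu2, Ne.symm hu2] at h1 ⊢
            omega
        · by_cases hu2 : u = v₂
          · subst hu2
            simp [hu1, Ne.symm hu1] at h1 ⊢
            omega
          · simp [hu1, hu2, Ne.symm hu1, Ne.symm hu2] at h1 ⊢
            omega
      · intro p hp'
        rcases List.mem_cons.mp hp' with rfl | hp'
        · exact hv₁
        · exact ih.2 p (List.mem_of_mem_erase hp')

/-- Pebble game correctness for `(k,0)`: any state reachable from the initial state
(`k` pebbles on each vertex, no edges) is `(k,0)`-sparse, the number of remaining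
pebbles is `k|V| − |E|`, and if the game terminates with exactly `0` pebbles then the
constructed (multi-)hypergraph is `(k,0)`-tight. -/
theorem stmt18 {V : Type*} [Fintype V] [DecidableEq V] (k : ℕ)
    (s : PebbleState V)
    (h : Relation.ReflTransGen PebbleStep ⟨([] : List (Finset V × V)), fun _ => k⟩ s) :
    (∀ V' : Finset V,
      (s.edges.countP (fun q => decide (q.1 ⊆ V'))) ≤ k * V'.card) ∧
    (∑ v, s.pebbles v = k * Fintype.card V - s.edges.length) ∧
    ((∑ v, s.pebbles v = 0) → s.edges.length = k * Fintype.card V) := by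
  obtain ⟨hinv, htail⟩ := pebble_inv k s h
  have hsum : ∑ v, s.pebbles v + s.edges.length = k * Fintype.card V := by
    have h1 : ∑ v, (s.pebbles v + s.edges.countP (fun q => decide (q.2 = v))) =
        ∑ _v : V, k := Finset.sum_congr rfl (fun v _ => hinv v)
    have h2 : ∑ v, s.edges.countP (fun q => decide (q.2 = v)) = s.edges.length := by
      rw [sum_countP_tail s.edges Finset.univ]
      simp
    rw [Finset.sum_add_distrib, h2] at h1
    simpa [Finset.card_univ, mul_comm] using h1
  refine ⟨?_, by omega, by omega⟩
  intro V'
  have hmono : s.edges.countP (fun q => decide (q.1 ⊆ V')) ≤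
      s.edges.countP (fun q => decide (q.2 ∈ V')) := by
    apply List.countP_mono_left
    intro a ha hpa
    simp only [decide_eq_true_eq] at hpa ⊢
    exact hpa (htail a ha)
  calc s.edges.countP (fun q => decide (q.1 ⊆ V'))
      ≤ s.edges.countP (fun q => decide (q.2 ∈ V')) := hmono
    _ = ∑ v ∈ V', s.edges.countP (fun q => decide (q.2 = v)) := (sum_countP_tail _ _).symm
    _ ≤ ∑ _v ∈ V', k := Finset.sum_le_sum (fun v _ => by have := hinv v; omega)
    _ = k * V'.card := by simp [mul_comm]
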